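/- Free-flight distance along the separatrix branch W₁ (Remark C.3): let a > b > 0, c = sqrt(a² − b²), λ = (a+c)/(a−c). Let φ₀ ∈ (0, π), ξ₀ = tan(φ₀/2), and φ₁ = 2 arctan(λ ξ₀). Then sqrt( a² (cos φ₀ + cos φ₁)² + b² (sin φ₀ + sin φ₁)² ) = 2a (1 + λ ξ₀²)² / ( (1 + ξ₀²)(1 + λ² ξ₀²) ). -/

import Mathlib

lemma cos_two_arctan (x : ℝ) : Real.cos (2 * Real.arctan x) = (1 - x ^ 2) / (1 + x ^ 2) := by
  have h : (0:ℝ) < 1 + x ^ 2 := by positivity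
  rw [Real.cos_two_mul, Real.cos_arctan, div_pow, one_pow, Real.sq_sqrt h.le]
  field_simp
  ring

lemma sin_two_arctan (x : ℝ) : Real.sin (2 * Real.arctan x) = 2 * x / (1 + x ^ 2) := by
  have h : (0:ℝ) < 1 + x ^ 2 := by positivity
  rw [Real.sin_two_mul, Real.sin_arctan, Real.cos_arctan]
  rw [show 2 * (x / Real.sqrt (1+x^2)) * (1 / Real.sqrt (1+x^2))
      = 2 * x / (Real.sqrt (1+x^2) * Real.sqrt (1+x^2)) from by ring,
    Real.mul_self_sqrt h.le]

/-- Remark C.3: free-flight distance along the separatrix branch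
`W₁`.  With `ξ₀ = tan(φ₀/2)` and `φ₁ = 2 arctan(λ ξ₀)`, the chord length
`sqrt(a²(cos φ₀ + cos φ₁)² + b²(sin φ₀ + sin φ₁)²)` equals
`2a(1 + λ ξ₀²)² / ((1 + ξ₀²)(1 + λ² ξ₀²))`. -/
theorem free_flight_distance_W1
    (a b : ℝ) (hb : 0 < b) (hab : b < a)
    (c lam : ℝ) (hc : c = Real.sqrt (a ^ 2 - b ^ 2)) (hlam : lam = (a + c) / (a - c))
    (φ₀ : ℝ) (hφ₀ : φ₀ ∈ Set.Ioo 0 Real.pi)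
    (ξ₀ : ℝ) (hξ₀ : ξ₀ = Real.tan (φ₀ / 2))
    (φ₁ : ℝ) (hφ₁ : φ₁ = 2 * Real.arctan (lam * ξ₀)) :
    Real.sqrt (a ^ 2 * (Real.cos φ₀ + Real.cos φ₁) ^ 2 +
        b ^ 2 * (Real.sin φ₀ + Real.sin φ₁) ^ 2)
      = 2 * a * (1 + lam * ξ₀ ^ 2) ^ 2 / ((1 + ξ₀ ^ 2) * (1 + lam ^ 2 * ξ₀ ^ 2)) := by
  have ha : 0 < a := hb.trans hab
  have hab2 : (0:ℝ) ≤ a ^ 2 - b ^ 2 := by nlinarith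
  have hc0 : 0 ≤ c := hc ▸ Real.sqrt_nonneg _
  have hcsq : c ^ 2 = a ^ 2 - b ^ 2 := by rw [hc, Real.sq_sqrt hab2]
  have hca : c < a := by nlinarith
  have hacne : a - c ≠ 0 := by linarith
  have hlam_pos : 0 < lam := by
    rw [hlam]; apply div_pos <;> linarith
  have key : b ^ 2 * (1 + lam) ^ 2 = 4 * a ^ 2 * lam := by
    rw [hlam]; field_simp; linear_combination 4*a^2*hcsq
  -- φ₀ = 2 * arctan ξ₀
  have hφ0' : φ₀ = 2 * Real.arctan ξ₀ := by
    rw [hξ₀, Real.arctan_tan (by linarith [hφ₀.1, Real.pi_pos] : -(Real.pi/2) < φ₀/2)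
      (by linarith [hφ₀.2] : φ₀/2 < Real.pi/2)]
    ring
  rw [hφ0', hφ₁, cos_two_arctan, sin_two_arctan, cos_two_arctan, sin_two_arctan]
  have hP : (0:ℝ) < 1 + ξ₀ ^ 2 := by positivity
  have hQ : (0:ℝ) < 1 + (lam * ξ₀) ^ 2 := by positivity
  have hQ' : 1 + lam ^ 2 * ξ₀ ^ 2 = 1 + (lam * ξ₀) ^ 2 := by ring
  have hR : (0:ℝ) ≤ 2 * a * (1 + lam * ξ₀ ^ 2) ^ 2 / ((1 + ξ₀ ^ 2) * (1 + lam ^ 2 * ξ₀ ^ 2)) := by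
    rw [hQ']; positivity
  rw [show a ^ 2 * ((1 - ξ₀ ^ 2) / (1 + ξ₀ ^ 2) + (1 - (lam * ξ₀) ^ 2) / (1 + (lam * ξ₀) ^ 2)) ^ 2
      + b ^ 2 * (2 * ξ₀ / (1 + ξ₀ ^ 2) + 2 * (lam * ξ₀) / (1 + (lam * ξ₀) ^ 2)) ^ 2
      = (2 * a * (1 + lam * ξ₀ ^ 2) ^ 2 / ((1 + ξ₀ ^ 2) * (1 + lam ^ 2 * ξ₀ ^ 2))) ^ 2 from by
    rw [hQ']
    field_simp
    linear_combination 4*ξ₀^2*(1+ξ₀^2*lam)^2*key]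
  exact Real.sqrt_sq hR
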